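/- If M is a finitely generated G_C-projective R-module, then the natural biduality map M → Hom_R(Hom_R(M, C), C) is an isomorphism. -/

import Mathlib

open TensorProduct CategoryTheory

universe u

section Preamble

variable (R : Type u) [CommRing R]

/-- `C` is a semidualizing `R`-module: finitely presented, the homothety map
`R → Hom_R(C,C)` is bijective, and `Ext^i_R(C,C) = 0` for all `i ≥ 1`. -/
def IsSemidualizing (C : Type u) [AddCommGroup C] [Module R C] : Prop :=
  Module.FinitePresentation R C ∧
  Function.Bijective (LinearMap.lsmul R C) ∧
  ∀ i : ℕ, 0 < i →
    Subsingleton (((Ext R (ModuleCat.{u} R) i).obj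
      (Opposite.op (ModuleCat.of R C))).obj (ModuleCat.of R C))

/-- A ring is coherent if every finitely generated ideal is finitely presented. -/
def IsCoherentRing : Prop :=
  ∀ I : Ideal R, I.FG → Module.FinitePresentation R I

variable (C : Type u) [AddCommGroup C] [Module R C]

/-- `M` is `G_C`-projective: it is the image `im(P₀ → C ⊗ P₋₁)` in an exact complex
`⋯ → P₁ → P₀ → C ⊗ P₋₁ → C ⊗ P₋₂ → ⋯` with all `Pᵢ` projective which stays exact
under `Hom_R(-, C ⊗ Q)` for every projective `Q`. -/
def IsGCProjective (M : Type u) [AddCommGroup M] [Module R M] : Prop :=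
  ∃ (X : ℤ → ModuleCat.{u} R) (d : ∀ n : ℤ, X (n + 1) →ₗ[R] X n),
    (∀ n : ℤ, Function.Exact (d (n + 1)) (d n)) ∧
    (∀ n : ℤ, 0 ≤ n → Module.Projective R (X n)) ∧
    (∀ n : ℤ, n < 0 → ∃ P : ModuleCat.{u} R, Module.Projective R P ∧
      Nonempty (X n ≃ₗ[R] C ⊗[R] P)) ∧
    Nonempty (M ≃ₗ[R] LinearMap.range (d (-1))) ∧
    (∀ Q : ModuleCat.{u} R, Module.Projective R Q → ∀ n : ℤ,
      Function.Exact (LinearMap.lcomp R (C ⊗[R] Q) (d n))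
        (LinearMap.lcomp R (C ⊗[R] Q) (d (n + 1))))

/-- `M` is `G_C`-injective: dual to `G_C`-projective, via an exact complex
`⋯ → Hom(C,I₁) → Hom(C,I₀) → I₋₁ → ⋯` with all `Iⱼ` injective which stays exact
under `Hom_R(Hom_R(C,I), -)` for every injective `I`. -/
def IsGCInjective (M : Type u) [AddCommGroup M] [Module R M] : Prop :=
  ∃ (X : ℤ → ModuleCat.{u} R) (d : ∀ n : ℤ, X (n + 1) →ₗ[R] X n),
    (∀ n : ℤ, Function.Exact (d (n + 1)) (d n)) ∧
    (∀ n : ℤ, n < 0 → Module.Injective R (X n)) ∧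
    (∀ n : ℤ, 0 ≤ n → ∃ I : ModuleCat.{u} R, Module.Injective R I ∧
      Nonempty (X n ≃ₗ[R] (C →ₗ[R] I))) ∧
    Nonempty (M ≃ₗ[R] LinearMap.range (d (-1))) ∧
    (∀ I : ModuleCat.{u} R, Module.Injective R I → ∀ n : ℤ,
      Function.Exact (LinearMap.llcomp (R := R) (σ₁₂ := RingHom.id R) (σ₁₃ := RingHom.id R) R (C →ₗ[R] I) (X (n + 1 + 1)) (X (n + 1)) (d (n + 1)))
        (LinearMap.llcomp (R := R) (σ₁₂ := RingHom.id R) (σ₁₃ := RingHom.id R) R (C →ₗ[R] I) (X (n + 1)) (X n) (d n)))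

/-- `M` is `G_C`-flat: it is the image `im(F₀ → C ⊗ F₋₁)` in an exact complex
`⋯ → F₁ → F₀ → C ⊗ F₋₁ → ⋯` with all `Fᵢ` flat which stays exact under
`Hom_R(C, I) ⊗_R -` for every injective `I`. -/
def IsGCFlat (M : Type u) [AddCommGroup M] [Module R M] : Prop :=
  ∃ (X : ℤ → ModuleCat.{u} R) (d : ∀ n : ℤ, X (n + 1) →ₗ[R] X n),
    (∀ n : ℤ, Function.Exact (d (n + 1)) (d n)) ∧
    (∀ n : ℤ, 0 ≤ n → Module.Flat R (X n)) ∧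
    (∀ n : ℤ, n < 0 → ∃ F : ModuleCat.{u} R, Module.Flat R F ∧
      Nonempty (X n ≃ₗ[R] C ⊗[R] F)) ∧
    Nonempty (M ≃ₗ[R] LinearMap.range (d (-1))) ∧
    (∀ I : ModuleCat.{u} R, Module.Injective R I → ∀ n : ℤ,
      Function.Exact (LinearMap.lTensor (C →ₗ[R] I) (d (n + 1)))
        (LinearMap.lTensor (C →ₗ[R] I) (d n)))

/-- `K` is an `n`-th syzygy of `M` in some resolution
`0 → K → G_{n-1} → ⋯ → G₀ → M → 0` whose terms `Gᵢ` all satisfy `P`. -/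
def IsSyzygyWith (P : ModuleCat.{u} R → Prop) :
    ℕ → ModuleCat.{u} R → ModuleCat.{u} R → Prop
  | 0, K, M => Nonempty (K ≃ₗ[R] M)
  | n + 1, K, M => ∃ (G : ModuleCat.{u} R) (f : G →ₗ[R] M), P G ∧
      Function.Surjective f ∧
      IsSyzygyWith P n K (ModuleCat.of R (LinearMap.ker f))

/-- `G_C`-flat dimension of `M` is at most `n`: there is an exact sequence
`0 → G_n → ⋯ → G₀ → M → 0` with all `Gᵢ` `G_C`-flat. -/
def GCFlatDimLE (M : ModuleCat.{u} R) (n : ℕ) : Prop :=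
  ∃ K : ModuleCat.{u} R, IsGCFlat R C K ∧
    IsSyzygyWith R (fun G => IsGCFlat R C G) n K M

/-- `R` is `G_C`-semihereditary: coherent, and every submodule of a flat module
is `G_C`-flat. -/
def IsGCSemihereditary : Prop :=
  IsCoherentRing R ∧
  ∀ F : ModuleCat.{u} R, Module.Flat R F →
    ∀ N : Submodule R F, IsGCFlat R C N

/-- The FP-injective dimension of `M` is at most `n`:
`Ext^{n+1}_R(N, M) = 0` for every finitely presented module `N`. -/
def FPInjDimLE (M : Type u) [AddCommGroup M] [Module R M] (n : ℕ) : Prop :=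
  ∀ N : ModuleCat.{u} R, Module.FinitePresentation R N →
    Subsingleton (((Ext R (ModuleCat.{u} R) (n + 1)).obj
      (Opposite.op N)).obj (ModuleCat.of R M))

/-- The flat dimension of `M` is at most `n`. -/
def FlatDimLE (M : Type u) [AddCommGroup M] [Module R M] (n : ℕ) : Prop :=
  ∃ K : ModuleCat.{u} R, Module.Flat R K ∧
    IsSyzygyWith R (fun G => Module.Flat R G) n K (ModuleCat.of R M)

/-- The injective dimension of `M` is at most `n`:
`Ext^i_R(N, M) = 0` for all `i > n` and all modules `N`. -/
def InjDimLE (M : Type u) [AddCommGroup M] [Module R M] (n : ℕ) : Prop :=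
  ∀ i : ℕ, n < i → ∀ N : ModuleCat.{u} R,
    Subsingleton (((Ext R (ModuleCat.{u} R) i).obj
      (Opposite.op N)).obj (ModuleCat.of R M))

end Preamble

/-- `M` is Gorenstein projective: it is an image in an exact complex of projective
modules `⋯ → P₁ → P₀ → P₋₁ → ⋯` which stays exact under `Hom_R(-, Q)` for every
projective `Q`. -/
def IsGorensteinProjective (R : Type u) [CommRing R]
    (M : Type u) [AddCommGroup M] [Module R M] : Prop :=
  ∃ (X : ℤ → ModuleCat.{u} R) (d : ∀ n : ℤ, X (n + 1) →ₗ[R] X n),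
    (∀ n : ℤ, Function.Exact (d (n + 1)) (d n)) ∧
    (∀ n : ℤ, Module.Projective R (X n)) ∧
    Nonempty (M ≃ₗ[R] LinearMap.range (d (-1))) ∧
    (∀ Q : ModuleCat.{u} R, Module.Projective R Q → ∀ n : ℤ,
      Function.Exact (LinearMap.lcomp R Q (d n)) (LinearMap.lcomp R Q (d (n + 1))))


section AuxGC
universe v
/-- For projective `P`, the module `C ⊗ P` is "C-torsionless": maps into `C`
separate its points. -/
lemma aux_gc_torsionless {R : Type v} [CommRing R] {C : Type v} [AddCommGroup C] [Module R C]
    {P : Type v} [AddCommGroup P] [Module R P]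
    (hP : Module.Projective R P) (z : C ⊗[R] P)
    (hz : ∀ χ : C ⊗[R] P →ₗ[R] C, χ z = 0) : z = 0 := by
  classical
  obtain ⟨s, hs⟩ := Module.projective_def'.mp hP
  have h2 : (LinearMap.lTensor C s) z = 0 := by
    have h3 : (TensorProduct.finsuppScalarRight R R C P) ((LinearMap.lTensor C s) z) = 0 := by
      ext j
      have := hz ((TensorProduct.rid R C).toLinearMap ∘ₗ
        LinearMap.lTensor C (Finsupp.lapply j) ∘ₗ LinearMap.lTensor C s)
      simp only [LinearMap.comp_apply] at this
      rw [TensorProduct.finsuppScalarRight_apply]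
      simpa using this
    exact (LinearEquiv.map_eq_zero_iff _).mp h3
  calc z = LinearMap.lTensor C (Finsupp.linearCombination R id) ((LinearMap.lTensor C s) z) := by
        rw [← LinearMap.lTensor_comp_apply, hs, LinearMap.lTensor_id, LinearMap.id_apply]
    _ = 0 := by rw [h2, map_zero]
end AuxGC

/-- for a finitely generated `G_C`-projective `M`, the natural
biduality map `M → Hom_R(Hom_R(M, C), C)`, `m ↦ (f ↦ f m)`, is an isomorphism. -/
theorem gcProjective_biduality
    (R : Type u) [CommRing R] (C : Type u) [AddCommGroup C] [Module R C] (hC : IsSemidualizing R C)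
    (M : Type u) [AddCommGroup M] [Module R M]
    (hfg : Module.Finite R M) (hM : IsGCProjective R C M) :
    Function.Bijective ((LinearMap.id (R := R) (M := M →ₗ[R] C)).flip) := by
  classical
  obtain ⟨-, hlsmul, -⟩ := hC
  obtain ⟨X, d, hd, -, hneg, ⟨ε⟩, h5⟩ := hM
  obtain ⟨P, hP, ⟨φ⟩⟩ := hneg (-1) (by norm_num)
  obtain ⟨P', hP', ⟨φ'⟩⟩ := hneg (-2) (by norm_num)
  set ι : M →ₗ[R] X (-1) := (LinearMap.range (d (-1))).subtype ∘ₗ ε.toLinearMap with hι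
  obtain ⟨s, hs⟩ := Module.projective_def'.mp hP
  set E : X (-1) →ₗ[R] (P →₀ C) :=
    (TensorProduct.finsuppScalarRight R R C P).toLinearMap ∘ₗ
      LinearMap.lTensor C s ∘ₗ φ.toLinearMap with hE
  set Pr : (P →₀ C) →ₗ[R] X (-1) :=
    φ.symm.toLinearMap ∘ₗ LinearMap.lTensor C (Finsupp.linearCombination R id) ∘ₗ
      (TensorProduct.finsuppScalarRight R R C P).symm.toLinearMap with hPr
  have hPrE : ∀ y : X (-1), Pr (E y) = y := by
    intro y
    have h1 : LinearMap.lTensor C (Finsupp.linearCombination R id)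
        (LinearMap.lTensor C s (φ y)) = φ y := by
      rw [← LinearMap.lTensor_comp_apply, hs, LinearMap.lTensor_id, LinearMap.id_apply]
    simp only [hPr, hE, LinearMap.comp_apply, LinearEquiv.coe_coe,
      LinearEquiv.symm_apply_apply, h1]
  obtain ⟨S, hS⟩ := hfg.fg_top
  set J : Finset P := S.biUnion (fun m => (E (ι m)).support) with hJdef
  have hJ : ∀ m : M, ∀ j ∉ J, E (ι m) j = 0 := by
    intro m
    have hmem : m ∈ Submodule.span R (S : Set M) := by rw [hS]; trivial
    induction hmem using Submodule.span_induction with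
    | mem x hx =>
        intro j hj
        by_contra hne
        exact hj (Finset.mem_biUnion.mpr ⟨x, hx, Finsupp.mem_support_iff.mpr hne⟩)
    | zero => intro j _; simp
    | add x y _ _ hx hy => intro j hj; simp [hx j hj, hy j hj]
    | smul a x _ hx => intro j hj; simp [hx j hj]
  set eqv := Equiv.ofBijective _ hlsmul with heqv
  set r : (X (-1) →ₗ[R] C) → P → R :=
    fun g j => eqv.symm (g ∘ₗ Pr ∘ₗ Finsupp.lsingle j) with hrdef
  have hr : ∀ (g : X (-1) →ₗ[R] C) (j : P) (c : C),
      r g j • c = g (Pr (Finsupp.single j c)) := by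
    intro g j c
    have h1 : LinearMap.lsmul R C (r g j) = g ∘ₗ Pr ∘ₗ Finsupp.lsingle j :=
      eqv.apply_symm_apply (g ∘ₗ Pr ∘ₗ Finsupp.lsingle j)
    have h2 := DFunLike.congr_fun h1 c
    simpa using h2
  have hdec : ∀ y : X (-1), (∀ j ∉ J, E y j = 0) →
      E y = ∑ j ∈ J, Finsupp.single j (E y j) := by
    intro y hy
    ext a
    rw [Finsupp.finset_sum_apply]
    simp only [Finsupp.single_apply]
    rw [Finset.sum_ite_eq' J a (fun x => E y x)]
    by_cases ha : a ∈ J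
    · simp [ha]
    · simp [ha, hy a ha]
  have hkey : ∀ y : X (-1), (∀ j ∉ J, E y j = 0) → ∀ g : X (-1) →ₗ[R] C,
      g y = ∑ j ∈ J, r g j • E y j := by
    intro y hy g
    conv_lhs => rw [← hPrE y, hdec y hy]
    rw [map_sum, map_sum]
    exact Finset.sum_congr rfl fun j _ => (hr g j _).symm
  set fj : P → (M →ₗ[R] C) := fun j => (Finsupp.lapply j) ∘ₗ E ∘ₗ ι with hfj
  have hg0 : ∀ g : X (-1) →ₗ[R] C, g ∘ₗ ι = ∑ j ∈ J, r g j • fj j := by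
    intro g
    ext m
    rw [LinearMap.comp_apply, hkey (ι m) (hJ m) g, LinearMap.sum_apply]
    exact Finset.sum_congr rfl fun j _ => by simp [hfj]
  have hext : ∀ f : M →ₗ[R] C, ∃ g : X (-1) →ₗ[R] C, g ∘ₗ ι = f := by
    intro f
    have hQproj : Module.Projective R (ModuleCat.of R R) :=
      inferInstanceAs (Module.Projective R R)
    have hh := h5 (ModuleCat.of R R) hQproj (-1)
    set ρ : C ⊗[R] (ModuleCat.of R R) ≃ₗ[R] C := TensorProduct.rid R C with hρ
    set f' : X (-1 + 1) →ₗ[R] C ⊗[R] (ModuleCat.of R R) :=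
      ρ.symm.toLinearMap ∘ₗ f ∘ₗ ε.symm.toLinearMap ∘ₗ (d (-1)).rangeRestrict with hf'
    have h0 : LinearMap.lcomp R (C ⊗[R] (ModuleCat.of R R)) (d (-1 + 1)) f' = 0 := by
      ext x
      show f' (d (-1 + 1) x) = 0
      have hz : d (-1) (d (-1 + 1) x) = 0 := (hd (-1)).apply_apply_eq_zero x
      have hmem0 : (d (-1)).rangeRestrict (d (-1 + 1) x) = 0 := Subtype.ext (by simpa using hz)
      rw [hf']
      simp only [LinearMap.comp_apply, LinearEquiv.coe_coe]
      rw [hmem0]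
      simp
    obtain ⟨ψ, hψ⟩ := (hh f').mp h0
    refine ⟨ρ.toLinearMap ∘ₗ ψ, ?_⟩
    ext m
    obtain ⟨x, hx⟩ := (ε m).2
    have h2 : ψ (d (-1) x) = f' x := by
      have := DFunLike.congr_fun hψ x
      simpa [LinearMap.lcomp_apply] using this
    have h3 : (d (-1)).rangeRestrict x = ε m := Subtype.ext hx
    have h4 : ι m = d (-1) x := hx.symm
    simp only [LinearMap.comp_apply, LinearEquiv.coe_coe, h4, h2, hf',
      h3, LinearEquiv.apply_symm_apply, LinearEquiv.symm_apply_apply]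
  constructor
  · refine (injective_iff_map_eq_zero _).mpr ?_
    intro m hm
    have hall : ∀ f : M →ₗ[R] C, f m = 0 := by
      intro f
      have := DFunLike.congr_fun hm f
      simpa using this
    have hEzero : E (ι m) = 0 := by
      ext j
      by_cases hj : j ∈ J
      · exact hall (fj j)
      · exact hJ m j hj
    have hι0 : ι m = 0 := by
      have := hPrE (ι m)
      rw [hEzero, map_zero] at this
      exact this.symm
    have hεm : ε m = 0 := Subtype.ext hι0
    simpa using congrArg ε.symm hεm
  · intro Φ
    set y₀ : X (-1) := Pr (∑ j ∈ J, Finsupp.single j (Φ (fj j))) with hy₀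
    have hgy : ∀ g : X (-1) →ₗ[R] C, g y₀ = Φ (g ∘ₗ ι) := by
      intro g
      rw [hy₀, map_sum, map_sum, hg0 g, map_sum]
      refine Finset.sum_congr rfl fun j _ => ?_
      rw [← hr g j (Φ (fj j)), map_smul]
    set δ : X (-1) →ₗ[R] X (-2) := d (-2) with hδ
    have hδι : ∀ m : M, δ (ι m) = 0 := by
      intro m
      exact (hd (-2) (ι m)).mpr ⟨_, (ε m).2.choose_spec⟩
    have hδy₀ : δ y₀ = 0 := by
      have hχ : ∀ χ : X (-2) →ₗ[R] C, χ (δ y₀) = 0 := by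
        intro χ
        have h1 : (χ ∘ₗ δ) ∘ₗ ι = 0 := by
          ext m; simp [hδι m]
        have h2 := hgy (χ ∘ₗ δ)
        rw [h1, map_zero] at h2
        simpa using h2
      have h3 : φ' (δ y₀) = 0 :=
        aux_gc_torsionless hP' (φ' (δ y₀)) (fun χ' => by
          simpa using hχ (χ' ∘ₗ φ'.toLinearMap))
      exact (LinearEquiv.map_eq_zero_iff φ').mp h3
    have hmem : y₀ ∈ LinearMap.range (d (-1)) := by
      obtain ⟨x, hx⟩ := (hd (-2) (show ↑(X (-2+1)) from y₀)).mp hδy₀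
      exact ⟨x, hx⟩
    refine ⟨ε.symm ⟨y₀, hmem⟩, ?_⟩
    have hιm₀ : ι (ε.symm ⟨y₀, hmem⟩) = y₀ := by
      simp [hι]
    ext f
    obtain ⟨g, hg⟩ := hext f
    have h6 : f (ε.symm ⟨y₀, hmem⟩) = g (ι (ε.symm ⟨y₀, hmem⟩)) := by
      rw [← hg]; rfl
    have h7 : f (ε.symm ⟨y₀, hmem⟩) = Φ f := by
      rw [h6, hιm₀, hgy g, hg]
    simpa using h7
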